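/- Let d ≥ 1 and let ρ be a symmetric non-degenerate probability measure on ℝ^d (ρ(H) < 1 for every affine hyperplane H) with ∫_{ℝ^d} ‖z‖⁴ dρ(z) < ∞ and covariance matrix Σ. Let (U_i)_{i≥1} be i.i.d. random vectors with law ρ, let B_n² = ∑_{j=1}^n U_j ᵗU_j, and on the event where B_n² is invertible set a_{i,n} = (B_n²)^{−1/2} U_i for 1 ≤ i ≤ n. Then for every z ∈ ℝ^d, almost surely B_n² is invertible for all n large enough and n ∑_{i=1}^n ⟨z, a_{i,n}⟩⁴ → M₄(Σ^{−1/2}z) as n → ∞. -/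

import Mathlib

open MeasureTheory Filter Matrix Real

noncomputable section

/-- `T_n(x) = ∑ i, x_i ᵗx_i`. -/
def Tmat (d n : ℕ) (x : Fin n → Fin d → ℝ) : Matrix (Fin d) (Fin d) ℝ :=
  ∑ i, Matrix.vecMulVec (x i) (x i)

/-- `S_n(x) = x_1 + … + x_n`. -/
def Svec (d n : ℕ) (x : Fin n → Fin d → ℝ) : Fin d → ℝ := ∑ i, x i

/-- the Hamiltonian `(1/2)⟨T_n⁻¹ S_n, S_n⟩`. -/
def Hfun (d n : ℕ) (x : Fin n → Fin d → ℝ) : ℝ :=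
  (1 / 2) * dotProduct ((Tmat d n x)⁻¹.mulVec (Svec d n x)) (Svec d n x)

/-- normalization constant `Z_n`. -/
def Zconst (d : ℕ) (ρ : Measure (Fin d → ℝ)) (n : ℕ) : ℝ :=
  ∫ x : Fin n → Fin d → ℝ,
    Set.indicator {x | 0 < (Tmat d n x).det} (fun x => Real.exp (Hfun d n x)) x
    ∂ Measure.pi fun _ => ρ

/-- the Curie-Weiss model of SOC `μ̃_{n,ρ}`. -/
def CW (d : ℕ) (ρ : Measure (Fin d → ℝ)) (n : ℕ) : Measure (Fin n → Fin d → ℝ) :=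
  (Measure.pi fun _ => ρ).withDensity fun x =>
    Set.indicator {x | 0 < (Tmat d n x).det}
      (fun x => ENNReal.ofReal (Real.exp (Hfun d n x) / Zconst d ρ n)) x

/-- covariance matrix `Σ = ∫ z ᵗz dρ(z)`. -/
def covM (d : ℕ) (ρ : Measure (Fin d → ℝ)) : Matrix (Fin d) (Fin d) ℝ :=
  Matrix.of fun i j => ∫ z, z i * z j ∂ρ

/-- `M₄(z) = ∑ (∫ yᵢyⱼyₖyₗ dρ) zᵢzⱼzₖzₗ`. -/
def M4 (d : ℕ) (ρ : Measure (Fin d → ℝ)) (z : Fin d → ℝ) : ℝ :=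
  ∑ i : Fin d, ∑ j : Fin d, ∑ k : Fin d, ∑ l : Fin d,
    (∫ y, y i * y j * y k * y l ∂ρ) * (z i * z j * z k * z l)

/-- symmetric measure: invariant under `z ↦ -z`. -/
def SymMeas (d : ℕ) (ρ : Measure (Fin d → ℝ)) : Prop := ρ.map (fun z => -z) = ρ

/-- condition `(*)` : some Gaussian exponential moment. -/
def CondStar (d : ℕ) (ρ : Measure (Fin d → ℝ)) : Prop :=
  ∃ v₀ > (0:ℝ), Integrable (fun z => Real.exp (v₀ * dotProduct z z)) ρ

/-- the ρ-measure of every vector hyperplane is `< 1/√e`. -/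
def HypLt (d : ℕ) (ρ : Measure (Fin d → ℝ)) : Prop :=
  ∀ s : Fin d → ℝ, s ≠ 0 →
    ρ {z | dotProduct s z = 0} < ENNReal.ofReal (1 / Real.sqrt (Real.exp 1))

/-- non-degeneracy: the ρ-measure of every affine hyperplane is `< 1`. -/
def NonDeg (d : ℕ) (ρ : Measure (Fin d → ℝ)) : Prop :=
  ∀ s : Fin d → ℝ, s ≠ 0 → ∀ c : ℝ, ρ {z | dotProduct s z = c} < 1

-- positive square root of a positive semi-definite matrix (junk value otherwise).
open scoped Classical in
def psqrt (d : ℕ) (M : Matrix (Fin d) (Fin d) ℝ) : Matrix (Fin d) (Fin d) ℝ :=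
  if h : M.PosSemidef then (h.1.eigenvectorUnitary : Matrix (Fin d) (Fin d) ℝ) *
    Matrix.diagonal (Real.sqrt ∘ h.1.eigenvalues) *
    (star h.1.eigenvectorUnitary : Matrix (Fin d) (Fin d) ℝ) else 0

/-- Euclidean norm on `ℝ^d`. -/
def vnorm (d : ℕ) (v : Fin d → ℝ) : ℝ := Real.sqrt (dotProduct v v)

/-- Frobenius norm on `d × d` matrices. -/
def mnorm (d : ℕ) (M : Matrix (Fin d) (Fin d) ℝ) : ℝ :=
  Real.sqrt (∑ i : Fin d, ∑ j : Fin d, (M i j) ^ 2)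

/-- the log-Laplace transform `Λ` of `(Z, Z ᵗZ)`, with values in `(-∞, +∞]`. -/
def Lam (d : ℕ) (ρ : Measure (Fin d → ℝ)) (u : Fin d → ℝ)
    (A : Matrix (Fin d) (Fin d) ℝ) : EReal :=
  ENNReal.log (∫⁻ z, ENNReal.ofReal
    (Real.exp (dotProduct u z + dotProduct (A.mulVec z) z)) ∂ρ)

/-- the Cramér transform `I` of `(Z, Z ᵗZ)`. -/
def CramerI (d : ℕ) (ρ : Measure (Fin d → ℝ)) (x : Fin d → ℝ)
    (M : Matrix (Fin d) (Fin d) ℝ) : EReal :=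
  ⨆ p : (Fin d → ℝ) × {A : Matrix (Fin d) (Fin d) ℝ // A.IsSymm},
    ((dotProduct x p.1 + (M * (p.2 : Matrix (Fin d) (Fin d) ℝ)).trace : ℝ) : EReal)
      - Lam d ρ p.1 p.2

end

open Topology
open scoped MatrixOrder

noncomputable section
variable {d : ℕ}

lemma psqrt_eq {M : Matrix (Fin d) (Fin d) ℝ} (h : M.PosSemidef) : psqrt d M = CFC.sqrt M := by
  rw [psqrt, dif_pos h, CFC.sqrt_eq_cfc, cfc_nnreal_eq_real _ M, h.1.cfc_eq]
  simp [Matrix.IsHermitian.cfc, Unitary.conjStarAlgAut_apply]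
  congr 3
  funext i
  exact congrArg Real.sqrt (max_eq_left (h.eigenvalues_nonneg i)).symm

lemma psqrt_psd {M : Matrix (Fin d) (Fin d) ℝ} (h : M.PosSemidef) :
    (psqrt d M).PosSemidef := by rw [psqrt_eq h]; exact Matrix.nonneg_iff_posSemidef.mp (CFC.sqrt_nonneg M)

lemma psqrt_sq {M : Matrix (Fin d) (Fin d) ℝ} (h : M.PosSemidef) :
    psqrt d M * psqrt d M = M := by rw [psqrt_eq h]; exact CFC.sqrt_mul_sqrt_self M (Matrix.nonneg_iff_posSemidef.mpr h)

-- quadratic form of psd matrices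
lemma psd_quad_nonneg {M : Matrix (Fin d) (Fin d) ℝ} (h : M.PosSemidef) (x : Fin d → ℝ) :
    0 ≤ dotProduct x (M.mulVec x) := by
  simpa using h.dotProduct_mulVec_nonneg x

lemma posdef_quad_pos {M : Matrix (Fin d) (Fin d) ℝ} (h : M.PosDef) {x : Fin d → ℝ} (hx : x ≠ 0) :
    0 < dotProduct x (M.mulVec x) := by
  simpa using h.dotProduct_mulVec_pos hx

-- symmetric
lemma psd_symm {M : Matrix (Fin d) (Fin d) ℝ} (h : M.IsHermitian) : Mᵀ = M := by
  ext i j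
  have := congrFun (congrFun h i) j
  simpa using this

-- diag nonneg
lemma psd_diag_nonneg {M : Matrix (Fin d) (Fin d) ℝ} (h : M.PosSemidef) (i : Fin d) :
    0 ≤ M i i := by
  have := psd_quad_nonneg h (Pi.single i 1)
  simpa [Matrix.mulVec_single, single_dotProduct] using this

lemma psd_trace_nonneg {M : Matrix (Fin d) (Fin d) ℝ} (h : M.PosSemidef) : 0 ≤ M.trace := by
  exact Finset.sum_nonneg fun i _ => psd_diag_nonneg h i

-- entry bound
lemma psd_entry_le_trace {M : Matrix (Fin d) (Fin d) ℝ} (h : M.PosSemidef) (i j : Fin d) :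
    |M i j| ≤ M.trace := by
  have hsymm := psd_symm h.1
  have hji : M j i = M i j := by
    have := congrFun (congrFun hsymm i) j
    simpa [Matrix.transpose_apply] using this
  rcases eq_or_ne i j with rfl | hij
  · rw [abs_of_nonneg (psd_diag_nonneg h i)]
    calc M i i ≤ ∑ k, M k k := Finset.single_le_sum (fun k _ => psd_diag_nonneg h k) (Finset.mem_univ i)
    _ = M.trace := rfl
  · have h1 := psd_quad_nonneg h (Pi.single i 1 + Pi.single j 1)
    have h2 := psd_quad_nonneg h (Pi.single i 1 - Pi.single j 1)
    have e1 : dotProduct (Pi.single i 1 + Pi.single j 1)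
        (M.mulVec (Pi.single i 1 + Pi.single j 1)) = M i i + M j j + 2 * M i j := by
      simp [Matrix.mulVec_add, add_dotProduct, Matrix.mulVec_single,
        single_dotProduct, dotProduct_add, hji]
      ring
    have e2 : dotProduct (Pi.single i 1 - Pi.single j 1)
        (M.mulVec (Pi.single i 1 - Pi.single j 1)) = M i i + M j j - 2 * M i j := by
      simp [Matrix.mulVec_sub, sub_dotProduct, Matrix.mulVec_single,
        single_dotProduct, dotProduct_sub, hji]
      ring
    rw [e1] at h1; rw [e2] at h2
    have hd : M i i + M j j ≤ M.trace := by
      have : ∑ k ∈ ({i, j} : Finset (Fin d)), M k k ≤ ∑ k, M k k :=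
        Finset.sum_le_sum_of_subset_of_nonneg (Finset.subset_univ _)
          (fun k _ _ => psd_diag_nonneg h k)
      rwa [Finset.sum_pair hij] at this
    rw [abs_le]
    constructor <;> nlinarith

-- trace² ≤ d * trace(M²)
lemma trace_sq_le {M : Matrix (Fin d) (Fin d) ℝ} (h : M.IsHermitian) :
    M.trace ^ 2 ≤ (d : ℝ) * (M * M).trace := by
  have hsymm := psd_symm h
  have h1 : M.trace ^ 2 ≤ (d : ℝ) * ∑ i, (M i i) ^ 2 := by
    have := sq_sum_le_card_mul_sum_sq (s := (Finset.univ : Finset (Fin d)))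
      (f := fun i => M i i)
    simpa [Matrix.trace, Matrix.diag] using this
  refine h1.trans ?_
  have h2 : ∑ i, (M i i) ^ 2 ≤ (M * M).trace := by
    have : (M * M).trace = ∑ i, ∑ j, M i j * M j i := by
      simp [Matrix.trace, Matrix.diag, Matrix.mul_apply]
    rw [this]
    refine Finset.sum_le_sum fun i _ => ?_
    have : (M i i)^2 = M i i * M i i := sq (M i i) ▸ by ring
    rw [this]
    refine Finset.single_le_sum (f := fun j => M i j * M j i) (fun j _ => ?_) (Finset.mem_univ i)
    have := congrFun (congrFun hsymm j) i
    simp only [Matrix.transpose_apply] at this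
    show 0 ≤ M i j * M j i
    rw [this]
    exact mul_self_nonneg _
  nlinarith [h2, Nat.cast_nonneg (α := ℝ) d]
lemma posSemidef_smul {M : Matrix (Fin d) (Fin d) ℝ} (h : M.PosSemidef) {c : ℝ} (hc : 0 ≤ c) :
    (c • M).PosSemidef := by
  refine Matrix.PosSemidef.of_dotProduct_mulVec_nonneg ?_ fun x => ?_
  · have := h.1
    rw [Matrix.IsHermitian] at this ⊢
    ext i j
    simp only [Matrix.conjTranspose_apply, Matrix.smul_apply, smul_eq_mul, star_trivial]
    have := congrFun (congrFun this i) j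
    simp only [Matrix.conjTranspose_apply, star_trivial] at this
    rw [this]
  · have h2 := h.dotProduct_mulVec_nonneg x
    have : dotProduct (star x) ((c • M).mulVec x)
        = c * dotProduct (star x) (M.mulVec x) := by
      rw [Matrix.smul_mulVec, dotProduct_smul]
      rfl
    rw [this]
    exact mul_nonneg hc h2

lemma quad_smul (M : Matrix (Fin d) (Fin d) ℝ) (x : Fin d → ℝ) (a : ℝ) :
    dotProduct (a • x) (M.mulVec (a • x)) = a ^ 2 * dotProduct x (M.mulVec x) := by
  rw [Matrix.mulVec_smul, dotProduct_smul, smul_dotProduct]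
  simp [smul_eq_mul]; ring

lemma quad_abs_le (M : Matrix (Fin d) (Fin d) ℝ) (x : Fin d → ℝ) :
    |dotProduct x (M.mulVec x)| ≤
      (∑ i, ∑ j, |M i j|) * dotProduct x x := by
  have hx2 : ∀ i, (x i) ^ 2 ≤ dotProduct x x := by
    intro i
    have : dotProduct x x = ∑ k, x k * x k := rfl
    rw [this]
    have hterm : x i * x i ≤ ∑ k, x k * x k := Finset.single_le_sum
      (f := fun k => x k * x k) (fun k _ => mul_self_nonneg _) (Finset.mem_univ i)
    nlinarith [hterm]
  have hxx : 0 ≤ dotProduct x x := by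
    exact Finset.sum_nonneg fun k _ => mul_self_nonneg _
  have hxij : ∀ i j, |x i| * |x j| ≤ dotProduct x x := by
    intro i j
    nlinarith [hx2 i, hx2 j, abs_nonneg (x i), abs_nonneg (x j), sq_abs (x i), sq_abs (x j)]
  have : dotProduct x (M.mulVec x) = ∑ i, ∑ j, x i * (M i j * x j) := by
    simp [dotProduct, Matrix.mulVec, Finset.mul_sum]
  rw [this]
  calc |∑ i, ∑ j, x i * (M i j * x j)| ≤ ∑ i, |∑ j, x i * (M i j * x j)| :=
        Finset.abs_sum_le_sum_abs _ _
    _ ≤ ∑ i, ∑ j, |x i * (M i j * x j)| :=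
        Finset.sum_le_sum fun i _ => Finset.abs_sum_le_sum_abs _ _
    _ ≤ ∑ i, ∑ j, |M i j| * dotProduct x x := by
        refine Finset.sum_le_sum fun i _ => Finset.sum_le_sum fun j _ => ?_
        rw [abs_mul, abs_mul]
        calc |x i| * (|M i j| * |x j|) = |M i j| * (|x i| * |x j|) := by ring
          _ ≤ |M i j| * dotProduct x x :=
            mul_le_mul_of_nonneg_left (hxij i j) (abs_nonneg _)
    _ = (∑ i, ∑ j, |M i j|) * dotProduct x x := by
        rw [Finset.sum_mul]
        exact Finset.sum_congr rfl fun i _ => by rw [Finset.sum_mul]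

lemma posdef_quad_lower (hd : 1 ≤ d) {M : Matrix (Fin d) (Fin d) ℝ} (h : M.PosDef) :
    ∃ c > (0:ℝ), ∀ x : Fin d → ℝ,
      c * dotProduct x x ≤ dotProduct x (M.mulVec x) := by
  set S : Set (Fin d → ℝ) := {x | dotProduct x x = 1} with hS
  have hScomp : IsCompact S := by
    have hclosed : IsClosed S := by
      have : Continuous fun x : Fin d → ℝ => dotProduct x x := by
        continuity
      exact isClosed_eq this continuous_const
    have hbdd : S ⊆ Metric.closedBall 0 1 := by
      intro x hx
      simp only [Metric.mem_closedBall, dist_zero_right]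
      rw [pi_norm_le_iff_of_nonneg zero_le_one]
      intro i
      rw [Real.norm_eq_abs, abs_le]
      have hx2 : (x i)^2 ≤ 1 := by
        have h1 : dotProduct x x = ∑ k, x k * x k := rfl
        have hterm : x i * x i ≤ ∑ k, x k * x k := Finset.single_le_sum
          (f := fun k => x k * x k) (fun k _ => mul_self_nonneg _) (Finset.mem_univ i)
        rw [← h1, hx] at hterm
        nlinarith [hterm]
      constructor <;> nlinarith
    exact (isCompact_closedBall 0 1).of_isClosed_subset hclosed hbdd
  have hSne : S.Nonempty := by
    refine ⟨Pi.single ⟨0, hd⟩ 1, ?_⟩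
    simp [hS, dotProduct, Pi.single_apply]
  have hcont : Continuous fun x : Fin d → ℝ => dotProduct x (M.mulVec x) := by
    continuity
  obtain ⟨x₀, hx₀S, hx₀min⟩ := hScomp.exists_isMinOn hSne hcont.continuousOn
  rw [isMinOn_iff] at hx₀min
  have hx₀ne : x₀ ≠ 0 := by
    intro hcon
    rw [hcon] at hx₀S
    simp [hS, dotProduct] at hx₀S
  refine ⟨dotProduct x₀ (M.mulVec x₀), posdef_quad_pos h hx₀ne, fun x => ?_⟩
  rcases eq_or_ne x 0 with rfl | hx
  · simp [dotProduct]
  · have hxx : 0 < dotProduct x x := by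
      rcases (Finset.sum_nonneg (f := fun k => x k * x k)
        (fun k _ => mul_self_nonneg _) (s := Finset.univ)).lt_or_eq with h1 | h1
      · exact h1
      · exfalso
        apply hx
        funext k
        have hk := (Finset.sum_eq_zero_iff_of_nonneg
          (fun k (_ : k ∈ Finset.univ) => mul_self_nonneg (x k))).mp h1.symm k (Finset.mem_univ k)
        simp only [Pi.zero_apply]
        nlinarith [hk]
    set t := Real.sqrt (dotProduct x x) with ht
    have htpos : 0 < t := Real.sqrt_pos.mpr hxx
    have ht2 : t * t = dotProduct x x := Real.mul_self_sqrt hxx.le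
    have hy : (t⁻¹ • x) ∈ S := by
      simp only [hS, Set.mem_setOf_eq]
      rw [smul_dotProduct, dotProduct_smul, smul_eq_mul, smul_eq_mul, ← ht2]
      field_simp
    have hmin := hx₀min _ hy
    have hq : dotProduct (t⁻¹ • x) (M.mulVec (t⁻¹ • x))
        = (dotProduct x x)⁻¹ * dotProduct x (M.mulVec x) := by
      rw [quad_smul, inv_pow, ht, Real.sq_sqrt hxx.le]
    rw [hq] at hmin
    have h2 := mul_le_mul_of_nonneg_left hmin hxx.le
    rw [← mul_assoc, mul_inv_cancel₀ hxx.ne', one_mul] at h2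
    nlinarith [h2]
lemma matrix_tendsto_iff {f : ℕ → Matrix (Fin d) (Fin d) ℝ} {L : Matrix (Fin d) (Fin d) ℝ} :
    Tendsto f atTop (𝓝 L) ↔ ∀ i j, Tendsto (fun n => f n i j) atTop (𝓝 (L i j)) := by
  constructor
  · intro h i j
    exact ((continuous_id.matrix_elem i j).tendsto L).comp h
  · intro h
    exact tendsto_pi_nhds.mpr fun i => tendsto_pi_nhds.mpr fun j => h i j

lemma dot_self_pos {x : Fin d → ℝ} (hx : x ≠ 0) : 0 < dotProduct x x := by
  rcases (Finset.sum_nonneg (f := fun k => x k * x k)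
    (fun k _ => mul_self_nonneg _) (s := Finset.univ)).lt_or_eq with h1 | h1
  · exact h1
  · exfalso
    apply hx
    funext k
    have hk := (Finset.sum_eq_zero_iff_of_nonneg
      (fun k (_ : k ∈ Finset.univ) => mul_self_nonneg (x k))).mp h1.symm k (Finset.mem_univ k)
    simp only [Pi.zero_apply]
    nlinarith [hk]

lemma eventually_posdef (hd : 1 ≤ d) {A : ℕ → Matrix (Fin d) (Fin d) ℝ}
    {L : Matrix (Fin d) (Fin d) ℝ}
    (hA : ∀ n, (A n).PosSemidef) (hL : L.PosDef)
    (hlim : Tendsto A atTop (𝓝 L)) :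
    ∀ᶠ n in atTop, (A n).PosDef := by
  obtain ⟨c, hc, hcle⟩ := posdef_quad_lower hd hL
  have hE : Tendsto (fun n => ∑ i, ∑ j, |A n i j - L i j|) atTop (𝓝 0) := by
    have h0 : Tendsto (fun n => ∑ i, ∑ j, |A n i j - L i j|) atTop
        (𝓝 (∑ i : Fin d, ∑ j : Fin d, |L i j - L i j|)) := by
      refine tendsto_finset_sum _ fun i _ => tendsto_finset_sum _ fun j _ => ?_
      exact ((matrix_tendsto_iff.mp hlim i j).sub tendsto_const_nhds).abs
    simpa using h0
  filter_upwards [hE.eventually_lt_const hc] with n hn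
  refine Matrix.PosDef.of_dotProduct_mulVec_pos (hA n).1 fun x hx => ?_
  have hx0 : x ≠ 0 := hx
  have hxx := dot_self_pos hx0
  have hsplit : dotProduct x ((A n).mulVec x)
      = dotProduct x (L.mulVec x) + dotProduct x ((A n - L).mulVec x) := by
    rw [Matrix.sub_mulVec, dotProduct_sub]
    ring
  have hQ := quad_abs_le (A n - L) x
  have hle : (∑ i, ∑ j, |(A n - L) i j|) ≤ ∑ i, ∑ j, |A n i j - L i j| := le_of_eq (by
    refine Finset.sum_congr rfl fun i _ => Finset.sum_congr rfl fun j _ => ?_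
    simp [Matrix.sub_apply])
  have habs : |dotProduct x ((A n - L).mulVec x)|
      ≤ (∑ i, ∑ j, |A n i j - L i j|) * dotProduct x x :=
    le_trans hQ (mul_le_mul_of_nonneg_right hle hxx.le)
  have hlow := hcle x
  have hstar : dotProduct (star x) ((A n).mulVec x) = dotProduct x ((A n).mulVec x) := by
    simp
  rw [hstar, hsplit]
  have h1 : -((∑ i, ∑ j, |A n i j - L i j|) * dotProduct x x)
      ≤ dotProduct x ((A n - L).mulVec x) := neg_le_of_abs_le habs
  nlinarith [h1, hlow, mul_lt_mul_of_pos_right hn hxx]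

lemma sqrt_tendsto {A : ℕ → Matrix (Fin d) (Fin d) ℝ} {L : Matrix (Fin d) (Fin d) ℝ}
    (hA : ∀ n, (A n).PosSemidef) (hL : L.PosSemidef)
    (hlim : Tendsto A atTop (𝓝 L)) :
    Tendsto (fun n => psqrt d (A n)) atTop (𝓝 (psqrt d L)) := by
  have htr : Tendsto (fun n => (A n).trace) atTop (𝓝 L.trace) :=
    ((continuous_id.matrix_trace).tendsto L).comp hlim
  obtain ⟨C, hC⟩ := htr.bddAbove_range
  set R := Real.sqrt (d * C) with hR
  have hCnn : 0 ≤ C := le_trans (psd_trace_nonneg (hA 0)) (hC ⟨0, rfl⟩)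
  have hbound : ∀ n i j, |psqrt d (A n) i j| ≤ R := by
    intro n i j
    refine le_trans (psd_entry_le_trace (psqrt_psd (hA n)) i j) ?_
    have h3 := trace_sq_le (psqrt_psd (hA n)).1
    rw [psqrt_sq (hA n)] at h3
    have h4 : (A n).trace ≤ C := hC ⟨n, rfl⟩
    have h5 : (psqrt d (A n)).trace ^ 2 ≤ (d : ℝ) * C := by nlinarith [Nat.cast_nonneg (α := ℝ) d]
    have h6 := psd_trace_nonneg (psqrt_psd (hA n))
    rw [hR]
    rw [show ((d:ℝ) * C) = (psqrt d (A n)).trace ^ 2 + ((d:ℝ)*C - (psqrt d (A n)).trace ^2) by ring]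
    refine le_trans ?_ (Real.sqrt_le_sqrt (by nlinarith : (psqrt d (A n)).trace ^ 2 ≤ (psqrt d (A n)).trace ^ 2 + ((d:ℝ)*C - (psqrt d (A n)).trace ^2)))
    rw [Real.sqrt_sq h6]
  apply tendsto_of_subseq_tendsto
  intro ns hns
  set x : ℕ → (Fin d → Fin d → ℝ) := fun k => psqrt d (A (ns k)) with hxdef
  have hmem : ∀ k, x k ∈ Metric.closedBall (0 : Fin d → Fin d → ℝ) (max R 0) := by
    intro k
    simp only [Metric.mem_closedBall, dist_zero_right]
    rw [pi_norm_le_iff_of_nonneg (le_max_right _ _)]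
    intro i
    rw [pi_norm_le_iff_of_nonneg (le_max_right _ _)]
    intro j
    rw [Real.norm_eq_abs]
    exact le_trans (hbound _ i j) (le_max_left _ _)
  obtain ⟨M0, -, φ, hφ, hMconv⟩ :=
    (isCompact_closedBall (0 : Fin d → Fin d → ℝ) (max R 0)).tendsto_subseq hmem
  set M : Matrix (Fin d) (Fin d) ℝ := M0 with hM0
  refine ⟨φ, ?_⟩
  have hent : ∀ i j, Tendsto (fun k => psqrt d (A (ns (φ k))) i j) atTop (𝓝 (M i j)) := by
    intro i j
    exact (((continuous_apply j).comp (continuous_apply i)).tendsto M0).comp hMconv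
  have hMt : Tendsto (fun k => psqrt d (A (ns (φ k)))) atTop
      (𝓝 M) := matrix_tendsto_iff.mpr hent
  have hsub : Tendsto (fun k => A (ns (φ k))) atTop (𝓝 L) := hlim.comp (hns.comp hφ.tendsto_atTop)
  have hMpsd : M.PosSemidef := by
    refine Matrix.PosSemidef.of_dotProduct_mulVec_nonneg ?_ ?_
    · ext i j
      simp only [Matrix.conjTranspose_apply, star_trivial]
      refine tendsto_nhds_unique ?_ (hent i j)
      refine (hent j i).congr fun k => ?_
      have hs := psd_symm (psqrt_psd (hA (ns (φ k)))).1
      exact congrFun (congrFun hs i) j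
    · intro v
      have hcont : Continuous fun X : Matrix (Fin d) (Fin d) ℝ =>
          dotProduct (star v) (X.mulVec v) :=
        (continuous_const).dotProduct (continuous_id.matrix_mulVec continuous_const)
      have hq := (hcont.tendsto _).comp hMt
      exact ge_of_tendsto' hq fun k => (psqrt_psd (hA (ns (φ k)))).dotProduct_mulVec_nonneg v
  have hsq : M * M = L := by
    have h1 : Tendsto (fun k => psqrt d (A (ns (φ k))) * psqrt d (A (ns (φ k)))) atTop
        (𝓝 (M * M)) :=
      (((continuous_id.matrix_mul continuous_id)).tendsto M).comp hMt
    have h2 : (fun k => psqrt d (A (ns (φ k))) * psqrt d (A (ns (φ k))))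
        = fun k => A (ns (φ k)) := funext fun k => psqrt_sq (hA _)
    rw [h2] at h1
    exact tendsto_nhds_unique h1 hsub
  have hMeq : M = psqrt d L := by
    rw [psqrt_eq hL]
    exact (CFC.sqrt_unique hsq (Matrix.nonneg_iff_posSemidef.mpr hMpsd)).symm
  rw [← hMeq]
  exact hMt
lemma vecMulVec_psd (v : Fin d → ℝ) : (Matrix.vecMulVec v v).PosSemidef := by
  refine Matrix.PosSemidef.of_dotProduct_mulVec_nonneg ?_ ?_
  · ext i j
    simp only [Matrix.conjTranspose_apply, Matrix.vecMulVec_apply, star_trivial]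
    ring
  · intro x
    have he : dotProduct (star x) ((Matrix.vecMulVec v v).mulVec x)
        = (∑ i, v i * x i) * (∑ j, v j * x j) := by
      rw [Finset.sum_mul_sum]
      simp only [dotProduct, Matrix.mulVec, Matrix.vecMulVec_apply, star_trivial,
        Finset.mul_sum]
      refine Finset.sum_congr rfl fun i _ => Finset.sum_congr rfl fun j _ => ?_
      ring
    rw [he]
    exact mul_self_nonneg _

lemma sum_range_psd (n : ℕ) (u : ℕ → Fin d → ℝ) :
    (∑ j ∈ Finset.range n, Matrix.vecMulVec (u j) (u j)).PosSemidef := by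
  classical
  refine Finset.sum_induction _ _ (fun a b ha hb => ha.add hb) Matrix.PosSemidef.zero
    fun j _ => vecMulVec_psd (u j)

lemma dot_mulVec_symm {M : Matrix (Fin d) (Fin d) ℝ} (h : Mᵀ = M) (a b : Fin d → ℝ) :
    dotProduct a (M.mulVec b) = dotProduct (M.mulVec a) b := by
  rw [Matrix.dotProduct_mulVec]
  congr 1
  rw [← h, Matrix.vecMul_transpose, h]

lemma sum_pow_four (c : Fin d → ℝ) :
    (∑ i, c i) ^ 4 = ∑ i, ∑ j, ∑ k, ∑ l, c i * c j * c k * c l := by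
  rw [show ((∑ i, c i) ^ 4) = (∑ i, c i) * (∑ i, c i) * (∑ i, c i) * (∑ i, c i) by ring]
  simp only [Finset.sum_mul, Finset.mul_sum]
  refine Finset.sum_congr rfl fun i _ => ?_
  refine Finset.sum_congr rfl fun j _ => ?_
  refine Finset.sum_congr rfl fun k _ => ?_
  refine Finset.sum_congr rfl fun l _ => ?_
  ring

lemma sum_swap5 (n : ℕ) (F : ℕ → Fin d → Fin d → Fin d → Fin d → ℝ) :
    ∑ m ∈ Finset.range n, ∑ i, ∑ j, ∑ k, ∑ l, F m i j k l
    = ∑ i, ∑ j, ∑ k, ∑ l, ∑ m ∈ Finset.range n, F m i j k l := by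
  rw [Finset.sum_comm]
  refine Finset.sum_congr rfl fun i _ => ?_
  rw [Finset.sum_comm]
  refine Finset.sum_congr rfl fun j _ => ?_
  rw [Finset.sum_comm]
  refine Finset.sum_congr rfl fun k _ => ?_
  rw [Finset.sum_comm]

lemma expand_dot4 (n : ℕ) (v : Fin d → ℝ) (u : ℕ → Fin d → ℝ) :
    (n:ℝ)⁻¹ * ∑ m ∈ Finset.range n, (dotProduct v (u m)) ^ 4
    = ∑ i, ∑ j, ∑ k, ∑ l,
        ((∑ m ∈ Finset.range n, u m i * u m j * u m k * u m l) / (n:ℝ))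
          * (v i * v j * v k * v l) := by
  have hterm : ∀ m, (dotProduct v (u m)) ^ 4
      = ∑ i, ∑ j, ∑ k, ∑ l, (v i * u m i) * (v j * u m j) * (v k * u m k) * (v l * u m l) := by
    intro m
    rw [show dotProduct v (u m) = ∑ i, v i * u m i from rfl]
    exact sum_pow_four _
  calc (n:ℝ)⁻¹ * ∑ m ∈ Finset.range n, (dotProduct v (u m)) ^ 4
      = ∑ m ∈ Finset.range n, ∑ i, ∑ j, ∑ k, ∑ l,
          (n:ℝ)⁻¹ * ((v i * u m i) * (v j * u m j) * (v k * u m k) * (v l * u m l)) := by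
        rw [Finset.mul_sum]
        refine Finset.sum_congr rfl fun m _ => ?_
        rw [hterm m]
        simp only [Finset.mul_sum]
    _ = ∑ i, ∑ j, ∑ k, ∑ l, ∑ m ∈ Finset.range n,
          (n:ℝ)⁻¹ * ((v i * u m i) * (v j * u m j) * (v k * u m k) * (v l * u m l)) :=
        sum_swap5 n _
    _ = ∑ i, ∑ j, ∑ k, ∑ l,
          ((∑ m ∈ Finset.range n, u m i * u m j * u m k * u m l) / (n:ℝ))
            * (v i * v j * v k * v l) := by
        refine Finset.sum_congr rfl fun i _ => Finset.sum_congr rfl fun j _ =>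
          Finset.sum_congr rfl fun k _ => Finset.sum_congr rfl fun l _ => ?_
        rw [div_eq_mul_inv, Finset.sum_mul, Finset.sum_mul]
        refine Finset.sum_congr rfl fun m _ => ?_
        ring
lemma key_eq {n : ℕ} (hn : 1 ≤ n) (u : ℕ → Fin d → ℝ) (z : Fin d → ℝ)
    (hpd : ((n:ℝ)⁻¹ • ∑ j ∈ Finset.range n, Matrix.vecMulVec (u j) (u j)).PosDef) :
    (n:ℝ) * ∑ i ∈ Finset.range n,
      (dotProduct z
        ((psqrt d (∑ j ∈ Finset.range n, Matrix.vecMulVec (u j) (u j)))⁻¹.mulVec (u i))) ^ 4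
    = ∑ i, ∑ j, ∑ k, ∑ l,
        ((∑ m ∈ Finset.range n, u m i * u m j * u m k * u m l) / (n:ℝ))
          * (let v := (psqrt d ((n:ℝ)⁻¹ • ∑ j ∈ Finset.range n,
              Matrix.vecMulVec (u j) (u j)))⁻¹.mulVec z
             v i * v j * v k * v l) := by
  have hnpos : (0:ℝ) < n := by exact_mod_cast hn
  set B : Matrix (Fin d) (Fin d) ℝ := ∑ j ∈ Finset.range n, Matrix.vecMulVec (u j) (u j) with hBdef
  set A : Matrix (Fin d) (Fin d) ℝ := (n:ℝ)⁻¹ • B with hAdef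
  have hBpsd : B.PosSemidef := sum_range_psd n u
  have hApsd : A.PosSemidef := hpd.posSemidef
  set S : Matrix (Fin d) (Fin d) ℝ := psqrt d A with hSdef
  set v : Fin d → ℝ := S⁻¹.mulVec z with hvdef
  have hnB : (n:ℝ) • A = B := by
    rw [hAdef, smul_smul, mul_inv_cancel₀ hnpos.ne', one_smul]
  have hsqB : psqrt d B = Real.sqrt n • S := by
    have h1 : (Real.sqrt n • S).PosSemidef := posSemidef_smul (psqrt_psd hApsd) (Real.sqrt_nonneg _)
    have h2 : (Real.sqrt n • S) ^ 2 = B := by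
      rw [pow_two, smul_mul_smul_comm, Real.mul_self_sqrt hnpos.le, psqrt_sq hApsd, hnB]
    rw [psqrt_eq hBpsd]
    exact CFC.sqrt_unique (by rw [← pow_two]; exact h2) (Matrix.nonneg_iff_posSemidef.mpr h1)
  have hSdet : IsUnit S.det := by
    have h1 : S.det * S.det = A.det := by rw [← Matrix.det_mul, psqrt_sq hApsd]
    have h2 : A.det ≠ 0 := hpd.det_pos.ne'
    refine isUnit_iff_ne_zero.mpr fun hc => h2 ?_
    rw [← h1, hc, mul_zero]
  have hsn : Real.sqrt n ≠ 0 := (Real.sqrt_pos.mpr hnpos).ne'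
  have hinv : (psqrt d B)⁻¹ = (Real.sqrt n)⁻¹ • S⁻¹ := by
    rw [hsqB]
    refine Matrix.inv_eq_right_inv ?_
    rw [smul_mul_smul_comm, mul_inv_cancel₀ hsn, Matrix.mul_nonsing_inv _ hSdet, one_smul]
  have hSsymm : Sᵀ = S := psd_symm (psqrt_psd hApsd).1
  have hSisymm : (S⁻¹)ᵀ = S⁻¹ := by rw [Matrix.transpose_nonsing_inv, hSsymm]
  have hterm : ∀ i, dotProduct z ((psqrt d B)⁻¹.mulVec (u i))
      = (Real.sqrt n)⁻¹ * dotProduct v (u i) := by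
    intro i
    rw [hinv, Matrix.smul_mulVec, dotProduct_smul, smul_eq_mul]
    congr 1
    exact dot_mulVec_symm hSisymm z (u i)
  have hpow : ∀ i, (dotProduct z ((psqrt d B)⁻¹.mulVec (u i))) ^ 4
      = ((n:ℝ)^2)⁻¹ * (dotProduct v (u i)) ^ 4 := by
    intro i
    have h44 : (Real.sqrt n) ^ 4 = (n:ℝ) ^ 2 := by
      rw [show (4:ℕ) = 2 * 2 from rfl, pow_mul, Real.sq_sqrt hnpos.le]
    rw [hterm i, mul_pow, inv_pow, h44, ← inv_pow]
  calc (n:ℝ) * ∑ i ∈ Finset.range n,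
        (dotProduct z ((psqrt d B)⁻¹.mulVec (u i))) ^ 4
      = (n:ℝ)⁻¹ * ∑ i ∈ Finset.range n, (dotProduct v (u i)) ^ 4 := by
        rw [Finset.mul_sum, Finset.mul_sum]
        refine Finset.sum_congr rfl fun i _ => ?_
        rw [hpow i]
        field_simp
    _ = _ := by
        rw [expand_dot4 n v u]




lemma dot_self_nonneg (z : Fin d → ℝ) : 0 ≤ dotProduct z z :=
  Finset.sum_nonneg fun k _ => mul_self_nonneg _

lemma sq_le_dot (z : Fin d → ℝ) (i : Fin d) : z i ^ 2 ≤ dotProduct z z := by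
  have hterm : z i * z i ≤ ∑ k, z k * z k := Finset.single_le_sum
    (f := fun k => z k * z k) (fun _ _ => mul_self_nonneg _) (Finset.mem_univ i)
  have hD : dotProduct z z = ∑ k, z k * z k := rfl
  rw [hD]
  nlinarith [hterm]

lemma abs_pair_le (z : Fin d → ℝ) (i j : Fin d) :
    |z i * z j| ≤ dotProduct z z := by
  nlinarith [sq_le_dot z i, sq_le_dot z j, abs_nonneg (z i * z j), abs_mul (z i) (z j),
    sq_abs (z i), sq_abs (z j), abs_nonneg (z i), abs_nonneg (z j),
    sq_nonneg (|z i| - |z j|)]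

lemma meas_dot_sq : Measurable (fun z : Fin d → ℝ => (dotProduct z z) ^ 2) := by
  have h1 : Measurable (fun z : Fin d → ℝ => dotProduct z z) := by
    show Measurable fun z : Fin d → ℝ => ∑ i, z i * z i
    exact Finset.measurable_sum _ fun i _ => (measurable_pi_apply i).mul (measurable_pi_apply i)
  exact h1.pow_const 2

section prob
variable {ρ : Measure (Fin d → ℝ)} [IsProbabilityMeasure ρ]

lemma integrable_dotsq (h4 : Integrable (fun z => vnorm d z ^ 4) ρ) :
    Integrable (fun z : Fin d → ℝ => (dotProduct z z) ^ 2) ρ := by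
  have he : (fun z : Fin d → ℝ => (dotProduct z z) ^ 2)
      = fun z => vnorm d z ^ 4 := by
    funext z
    rw [vnorm, show (4:ℕ) = 2 * 2 from rfl, pow_mul, Real.sq_sqrt (dot_self_nonneg z)]
  rw [he]
  exact h4

lemma integrable_quad (h4 : Integrable (fun z => vnorm d z ^ 4) ρ) (i j k l : Fin d) :
    Integrable (fun z : Fin d → ℝ => z i * z j * z k * z l) ρ := by
  refine (integrable_dotsq h4).mono' ?_ (ae_of_all _ fun z => ?_)
  · exact ((((measurable_pi_apply i).mul (measurable_pi_apply j)).mul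
      (measurable_pi_apply k)).mul (measurable_pi_apply l)).aestronglyMeasurable
  · rw [Real.norm_eq_abs]
    have h1 := abs_pair_le z i j
    have h2 := abs_pair_le z k l
    have : |z i * z j * z k * z l| = |z i * z j| * |z k * z l| := by
      rw [← abs_mul]
      ring_nf
    rw [this, pow_two]
    exact mul_le_mul h1 h2 (abs_nonneg _) (dot_self_nonneg z)

lemma integrable_pair (h4 : Integrable (fun z => vnorm d z ^ 4) ρ) (i j : Fin d) :
    Integrable (fun z : Fin d → ℝ => z i * z j) ρ := by
  refine (((integrable_const (1:ℝ)).add (integrable_dotsq h4)).mono' ?_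
    (ae_of_all _ fun z => ?_))
  · exact ((measurable_pi_apply i).mul (measurable_pi_apply j)).aestronglyMeasurable
  · rw [Real.norm_eq_abs]
    have h1 := abs_pair_le z i j
    have h2 := dot_self_nonneg z
    simp only [Pi.add_apply]
    nlinarith [h1, h2]

lemma covM_posdef (hnd : NonDeg d ρ) (h4 : Integrable (fun z => vnorm d z ^ 4) ρ) :
    (covM d ρ).PosDef := by
  have hpt : ∀ x z : Fin d → ℝ,
      (dotProduct x z) ^ 2 = ∑ i, ∑ j, (x i * x j) * (z i * z j) := by
    intro x z
    rw [pow_two, show dotProduct x z = ∑ i, x i * z i from rfl, Finset.sum_mul_sum]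
    refine Finset.sum_congr rfl fun i _ => Finset.sum_congr rfl fun j _ => ?_
    ring
  have hint2 : ∀ x : Fin d → ℝ, ∀ i j : Fin d,
      Integrable (fun z : Fin d → ℝ => (x i * x j) * (z i * z j)) ρ :=
    fun x i j => (integrable_pair h4 i j).const_mul _
  have hI : ∀ x : Fin d → ℝ, ∫ z, (dotProduct x z) ^ 2 ∂ρ
      = ∑ i, ∑ j, (x i * x j) * ∫ z, z i * z j ∂ρ := by
    intro x
    simp_rw [hpt x]
    rw [integral_finset_sum _ fun i _ => integrable_finset_sum _ fun j _ => hint2 x i j]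
    refine Finset.sum_congr rfl fun i _ => ?_
    rw [integral_finset_sum _ fun j _ => hint2 x i j]
    exact Finset.sum_congr rfl fun j _ => integral_const_mul _ _
  refine Matrix.PosDef.of_dotProduct_mulVec_pos ?_ ?_
  · ext i j
    simp only [Matrix.conjTranspose_apply, star_trivial, covM, Matrix.of_apply]
    exact integral_congr_ae (ae_of_all _ fun z => mul_comm _ _)
  · intro x hx
    have hstarx : star x = x := by
      funext i
      simp
    have hquad : dotProduct (star x) ((covM d ρ).mulVec x)
        = ∑ i, ∑ j, (x i * x j) * ∫ z, z i * z j ∂ρ := by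
      rw [hstarx]
      show ∑ i, x i * ((covM d ρ).mulVec x i) = _
      refine Finset.sum_congr rfl fun i _ => ?_
      show x i * ∑ j, covM d ρ i j * x j = _
      rw [Finset.mul_sum]
      refine Finset.sum_congr rfl fun j _ => ?_
      show x i * ((∫ z, z i * z j ∂ρ) * x j) = _
      ring
    rw [hquad, ← hI x]
    have hnn : 0 ≤ ∫ z, (dotProduct x z) ^ 2 ∂ρ :=
      integral_nonneg fun z => sq_nonneg _
    rcases hnn.lt_or_eq with h | h
    · exact h
    · exfalso
      have hintx : Integrable (fun z : Fin d → ℝ => (dotProduct x z) ^ 2) ρ := by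
        have := integrable_finset_sum (Finset.univ : Finset (Fin d))
          (fun i (_ : i ∈ Finset.univ) => integrable_finset_sum (Finset.univ : Finset (Fin d))
            (fun j (_ : j ∈ Finset.univ) => hint2 x i j))
        refine this.congr (ae_of_all _ fun z => ?_)
        simp only []
        rw [← hpt x z]
      have hae := (integral_eq_zero_iff_of_nonneg (fun z => sq_nonneg _) hintx).mp h.symm
      have hae2 : ∀ᵐ z ∂ρ, dotProduct x z = 0 := by
        filter_upwards [hae] with z hz
        have h0 : (dotProduct x z) ^ 2 = 0 := hz
        exact pow_eq_zero_iff two_ne_zero |>.mp h0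
      have hlt := hnd x hx 0
      have hc : ρ {z | ¬ (dotProduct x z = 0)} = 0 := ae_iff.mp hae2
      have h1 : (1:ENNReal) ≤ ρ {z | dotProduct x z = 0} := by
        have hu := measure_union_le (μ := ρ) {z | dotProduct x z = 0}
          {z | ¬ (dotProduct x z = 0)}
        have huniv : {z : Fin d → ℝ | dotProduct x z = 0}
            ∪ {z | ¬ (dotProduct x z = 0)} = Set.univ := by
          ext z
          by_cases h : dotProduct x z = 0 <;> simp [h]
        rw [huniv, measure_univ, hc, add_zero] at hu
        exact hu
      have hset : {z : Fin d → ℝ | dotProduct x z = 0}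
          = {z | dotProduct x z = (0:ℝ)} := rfl
      exact lt_irrefl _ (lt_of_le_of_lt h1 hlt)
end prob
end


lemma slln_aux {d : ℕ} {ρ : Measure (Fin d → ℝ)} [IsProbabilityMeasure ρ]
    {Ω : Type} [MeasurableSpace Ω] {P : Measure Ω} [IsProbabilityMeasure P]
    {U : ℕ → Ω → Fin d → ℝ} (hUmeas : ∀ i, Measurable (U i))
    (hUlaw : ∀ i, P.map (U i) = ρ)
    (hUindep : ProbabilityTheory.iIndepFun U P)
    (f : (Fin d → ℝ) → ℝ) (hf : Measurable f) (hint : Integrable f ρ) :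
    ∀ᵐ ω ∂P, Tendsto (fun n : ℕ => (∑ i ∈ Finset.range n, f (U i ω)) / n) atTop
      (𝓝 (∫ y, f y ∂ρ)) := by
  have hX : ∀ i, Measurable (fun ω => f (U i ω)) := fun i => hf.comp (hUmeas i)
  have hmap : ∀ i, P.map (fun ω => f (U i ω)) = ρ.map f := by
    intro i
    rw [← hUlaw i, Measure.map_map hf (hUmeas i)]
    rfl
  have hident : ∀ i, ProbabilityTheory.IdentDistrib (fun ω => f (U i ω))
      (fun ω => f (U 0 ω)) P P :=
    fun i => ⟨(hX i).aemeasurable, (hX 0).aemeasurable, by rw [hmap i, hmap 0]⟩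
  have hindep : Pairwise (Function.onFun (ProbabilityTheory.IndepFun · · P) (fun i ω => f (U i ω))) :=
    fun i j hij => (hUindep.indepFun hij).comp hf hf
  have hint0 : Integrable (fun ω => f (U 0 ω)) P := by
    have h : Integrable f (P.map (U 0)) := by rw [hUlaw 0]; exact hint
    exact (integrable_map_measure (by rw [hUlaw 0]; exact hint.1)
      (hUmeas 0).aemeasurable).mp h
  have hE : (∫ ω, f (U 0 ω) ∂P) = ∫ y, f y ∂ρ := by
    rw [← hUlaw 0, integral_map (hUmeas 0).aemeasurable
      (by rw [hUlaw 0]; exact hint.1)]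
  have := ProbabilityTheory.strong_law_ae_real (fun i ω => f (U i ω)) hint0 hindep hident
  rw [hE] at this
  exact this


/-- for i.i.d. `U_i` of law `ρ`, almost surely `B_n² = ∑ U_j ᵗU_j` is
eventually invertible and `n ∑ᵢ ⟨z, (B_n²)^{-1/2} Uᵢ⟩⁴ → M₄(Σ^{-1/2} z)`. -/
theorem ae_tendsto_quartic_sum
    (d : ℕ) (hd : 1 ≤ d) (ρ : Measure (Fin d → ℝ)) [IsProbabilityMeasure ρ]
    (hsym : SymMeas d ρ) (hnd : NonDeg d ρ)
    (h4 : Integrable (fun z => vnorm d z ^ 4) ρ)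
    (Ω : Type) [MeasurableSpace Ω] (P : Measure Ω) [IsProbabilityMeasure P]
    (U : ℕ → Ω → Fin d → ℝ) (hUmeas : ∀ i, Measurable (U i))
    (hUlaw : ∀ i, P.map (U i) = ρ)
    (hUindep : ProbabilityTheory.iIndepFun U P)
    (z : Fin d → ℝ) :
    ∀ᵐ ω ∂P,
      (∀ᶠ n : ℕ in atTop,
        IsUnit (∑ j ∈ Finset.range n, Matrix.vecMulVec (U j ω) (U j ω))) ∧
      Tendsto (fun n : ℕ => (n : ℝ) * ∑ i ∈ Finset.range n,
          (dotProduct z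
            ((psqrt d (∑ j ∈ Finset.range n,
              Matrix.vecMulVec (U j ω) (U j ω)))⁻¹.mulVec (U i ω))) ^ 4)
        atTop (nhds (M4 d ρ ((psqrt d (covM d ρ))⁻¹.mulVec z))) := by
  classical
  have hpair : ∀ᵐ ω ∂P, ∀ i : Fin d, ∀ j : Fin d,
      Tendsto (fun n : ℕ => (∑ m ∈ Finset.range n, U m ω i * U m ω j) / n) atTop
        (𝓝 (∫ y, y i * y j ∂ρ)) := by
    rw [ae_all_iff]
    intro i
    rw [ae_all_iff]
    intro j
    exact slln_aux hUmeas hUlaw hUindep (fun z => z i * z j)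
      ((measurable_pi_apply i).mul (measurable_pi_apply j)) (integrable_pair h4 i j)
  have hquad : ∀ᵐ ω ∂P, ∀ i j k l : Fin d,
      Tendsto (fun n : ℕ => (∑ m ∈ Finset.range n,
          U m ω i * U m ω j * U m ω k * U m ω l) / n) atTop
        (𝓝 (∫ y, y i * y j * y k * y l ∂ρ)) := by
    rw [ae_all_iff]
    intro i
    rw [ae_all_iff]
    intro j
    rw [ae_all_iff]
    intro k
    rw [ae_all_iff]
    intro l
    exact slln_aux hUmeas hUlaw hUindep (fun z => z i * z j * z k * z l)
      ((((measurable_pi_apply i).mul (measurable_pi_apply j)).mul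
        (measurable_pi_apply k)).mul (measurable_pi_apply l)) (integrable_quad h4 i j k l)
  filter_upwards [hpair, hquad] with ω hp hq
  set B : ℕ → Matrix (Fin d) (Fin d) ℝ :=
    fun n => ∑ j ∈ Finset.range n, Matrix.vecMulVec (U j ω) (U j ω) with hBdef
  set A : ℕ → Matrix (Fin d) (Fin d) ℝ := fun n => (n:ℝ)⁻¹ • B n with hAdef
  have hApsd : ∀ n, (A n).PosSemidef := fun n =>
    posSemidef_smul (sum_range_psd n (fun j => U j ω)) (by positivity)
  have hcovpd : (covM d ρ).PosDef := covM_posdef hnd h4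
  have hBentry : ∀ n i j, B n i j = ∑ m ∈ Finset.range n, U m ω i * U m ω j := by
    intro n i j
    rw [hBdef]
    simp only [Finset.sum_apply, Matrix.sum_apply, Matrix.vecMulVec_apply]
  have hlimA : Tendsto A atTop (𝓝 (covM d ρ)) := by
    rw [matrix_tendsto_iff]
    intro i j
    have he : ∀ n : ℕ, A n i j = (∑ m ∈ Finset.range n, U m ω i * U m ω j) / n := by
      intro n
      rw [hAdef]
      simp only [Matrix.smul_apply, smul_eq_mul]
      rw [hBentry n i j, div_eq_inv_mul]
    have hcov : covM d ρ i j = ∫ y, y i * y j ∂ρ := rfl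
    rw [hcov]
    exact (hp i j).congr fun n => (he n).symm
  have hpd : ∀ᶠ n in atTop, (A n).PosDef := eventually_posdef hd hApsd hcovpd hlimA
  have hSt : Tendsto (fun n => psqrt d (A n)) atTop (𝓝 (psqrt d (covM d ρ))) :=
    sqrt_tendsto hApsd hcovpd.posSemidef hlimA
  have hdet0 : (psqrt d (covM d ρ)).det ≠ 0 := by
    have h1 : (psqrt d (covM d ρ)).det * (psqrt d (covM d ρ)).det = (covM d ρ).det := by
      rw [← Matrix.det_mul, psqrt_sq hcovpd.posSemidef]
    intro hc
    rw [hc, mul_zero] at h1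
    exact hcovpd.det_pos.ne' h1.symm
  have hdetT : Tendsto (fun n => (psqrt d (A n)).det) atTop
      (𝓝 ((psqrt d (covM d ρ)).det)) := ((continuous_id.matrix_det).tendsto _).comp hSt
  have hadjT : Tendsto (fun n => (psqrt d (A n)).adjugate) atTop
      (𝓝 ((psqrt d (covM d ρ)).adjugate)) :=
    ((continuous_id.matrix_adjugate).tendsto _).comp hSt
  have hinv_def : ∀ M : Matrix (Fin d) (Fin d) ℝ, M⁻¹ = (M.det)⁻¹ • M.adjugate := by
    intro M
    rw [Matrix.inv_def]
    congr 1
    exact Ring.inverse_eq_inv _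
  have hinvT : Tendsto (fun n => (psqrt d (A n))⁻¹) atTop
      (𝓝 ((psqrt d (covM d ρ))⁻¹)) := by
    have h1 := (hdetT.inv₀ hdet0).smul hadjT
    simp only [← hinv_def] at h1
    exact h1
  have hvT : Tendsto (fun n => (psqrt d (A n))⁻¹.mulVec z) atTop
      (𝓝 ((psqrt d (covM d ρ))⁻¹.mulVec z)) :=
    ((continuous_id.matrix_mulVec continuous_const).tendsto _).comp hinvT
  set v : ℕ → Fin d → ℝ := fun n => (psqrt d (A n))⁻¹.mulVec z with hvdef
  set w : Fin d → ℝ := (psqrt d (covM d ρ))⁻¹.mulVec z with hwdef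
  have hvi : ∀ i, Tendsto (fun n => v n i) atTop (𝓝 (w i)) := fun i =>
    ((continuous_apply i).tendsto _).comp hvT
  have hg : Tendsto (fun n : ℕ => ∑ i, ∑ j, ∑ k, ∑ l,
      ((∑ m ∈ Finset.range n, U m ω i * U m ω j * U m ω k * U m ω l) / (n:ℝ))
        * (v n i * v n j * v n k * v n l)) atTop (𝓝 (M4 d ρ w)) := by
    rw [M4]
    refine tendsto_finset_sum _ fun i _ => tendsto_finset_sum _ fun j _ =>
      tendsto_finset_sum _ fun k _ => tendsto_finset_sum _ fun l _ => ?_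
    exact (hq i j k l).mul ((((hvi i).mul (hvi j)).mul (hvi k)).mul (hvi l))
  have hBA : ∀ n : ℕ, 1 ≤ n → B n = (n:ℝ) • A n := by
    intro n hn
    have hnpos : (0:ℝ) < n := by exact_mod_cast hn
    rw [hAdef]
    simp only []
    rw [smul_smul, mul_inv_cancel₀ hnpos.ne', one_smul]
  constructor
  · filter_upwards [hpd, eventually_ge_atTop 1] with n hn hn1
    have hnpos : (0:ℝ) < n := by exact_mod_cast hn1
    have hdet : (B n).det ≠ 0 := by
      rw [hBA n hn1, Matrix.det_smul]
      exact mul_ne_zero (pow_ne_zero _ hnpos.ne') hn.det_pos.ne'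
    exact (Matrix.isUnit_iff_isUnit_det _).mpr (isUnit_iff_ne_zero.mpr hdet)
  · refine Tendsto.congr' ?_ hg
    filter_upwards [hpd, eventually_ge_atTop 1] with n hn hn1
    exact (key_eq hn1 (fun j => U j ω) z hn).symm
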